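/- Let u₀, û_m : [0,T) → [0,∞) with ∫₀ᵀ u₀ < ∞. Suppose ‖·‖_{g(0)} ≤ C₃‖·‖_{g(t)} uniformly (uniform equivalence of norms), and the recursive bound û_m(t) ≤ C₃ u_m(t) + C₂ Σ_{l=1}^{m-1} û_l(t) + C₂C₃ u₀(t)(1 + ∫₀ᵗ û_m(τ)dτ) holds for continuous nonnegative functions u_m with ∫₀ᵀ u_m < ∞. If ∫₀ᵀ û_l < ∞ for l = 1,…,m−1, then ∫₀ᵀ û_m < ∞, with the explicit bound ∫₀ᵀ û_m ≤ exp(C₃∫₀ᵀu_m + C₂Σ_l∫₀ᵀû_l + C₂C₃∫₀ᵀu₀) − 1. -/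

import Mathlib

open MeasureTheory
open scoped BigOperators
open Set Topology Filter

/-- Inductive step of Lemma 3.4: the recursive integral bound propagates
integrability, with the explicit exponential bound. -/
theorem stmt11 (T : ℝ) (hT : 0 < T) (m : ℕ) (hm : 1 ≤ m)
    (u₀ um : ℝ → ℝ) (uhat : ℕ → ℝ → ℝ) (C₂ C₃ : ℝ)
    (hC₂ : 0 ≤ C₂) (hC₃ : 0 ≤ C₃)
    (hu₀nn : ∀ t ∈ Set.Ico (0 : ℝ) T, 0 ≤ u₀ t)
    (humnn : ∀ t ∈ Set.Ico (0 : ℝ) T, 0 ≤ um t)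
    (huhatnn : ∀ l, ∀ t ∈ Set.Ico (0 : ℝ) T, 0 ≤ uhat l t)
    (hcont : ContinuousOn (uhat m) (Set.Ico 0 T))
    (hu₀int : IntervalIntegrable u₀ volume 0 T)
    (humint : IntervalIntegrable um volume 0 T)
    (huhatint : ∀ l ∈ Finset.Ico 1 m, IntervalIntegrable (uhat l) volume 0 T)
    (hrec : ∀ t ∈ Set.Ico (0 : ℝ) T,
      uhat m t ≤ C₃ * um t + C₂ * (∑ l ∈ Finset.Ico 1 m, uhat l t)
        + C₂ * C₃ * u₀ t * (1 + ∫ τ in (0 : ℝ)..t, uhat m τ)) :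
    IntervalIntegrable (uhat m) volume 0 T ∧
    (∫ t in (0 : ℝ)..T, uhat m t)
      ≤ Real.exp (C₃ * (∫ t in (0 : ℝ)..T, um t)
          + C₂ * (∑ l ∈ Finset.Ico 1 m, ∫ t in (0 : ℝ)..T, uhat l t)
          + C₂ * C₃ * (∫ t in (0 : ℝ)..T, u₀ t)) - 1 := by
  set A : ℝ := C₃ * (∫ t in (0:ℝ)..T, um t)
      + C₂ * (∑ l ∈ Finset.Ico 1 m, ∫ t in (0:ℝ)..T, uhat l t)
      + C₂ * C₃ * (∫ t in (0:ℝ)..T, u₀ t) with hAdef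
  set φ : ℝ → ℝ := fun s => C₃ * um s + C₂ * (∑ l ∈ Finset.Ico 1 m, uhat l s)
      + C₂ * C₃ * u₀ s with hφdef
  -- integrability of φ
  have hSumint : IntervalIntegrable (fun s => ∑ l ∈ Finset.Ico 1 m, uhat l s) volume 0 T := by
    have h := IntervalIntegrable.sum (μ := volume) (a := (0:ℝ)) (b := T) (Finset.Ico 1 m) huhatint
    have he : (fun s => ∑ l ∈ Finset.Ico 1 m, uhat l s) = ∑ i ∈ Finset.Ico 1 m, uhat i := by
      funext s; simp
    rwa [he]
  have hφint : IntervalIntegrable φ volume 0 T :=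
    ((humint.const_mul C₃).add (hSumint.const_mul C₂)).add (hu₀int.const_mul (C₂*C₃))
  have hφnn : ∀ s ∈ Ico (0:ℝ) T, 0 ≤ φ s := by
    intro s hs
    have h2 : 0 ≤ C₃ * um s := mul_nonneg hC₃ (humnn s hs)
    have h3 : 0 ≤ C₂ * (∑ l ∈ Finset.Ico 1 m, uhat l s) :=
      mul_nonneg hC₂ (Finset.sum_nonneg fun l _ => huhatnn l s hs)
    have h4 : 0 ≤ C₂ * C₃ * u₀ s := mul_nonneg (mul_nonneg hC₂ hC₃) (hu₀nn s hs)
    simp only [hφdef]; linarith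
  have hAeq : ∫ t in (0:ℝ)..T, φ t = A := by
    simp only [hφdef]
    rw [intervalIntegral.integral_add ((humint.const_mul C₃).add (hSumint.const_mul C₂))
      (hu₀int.const_mul (C₂*C₃)),
      intervalIntegral.integral_add (humint.const_mul C₃) (hSumint.const_mul C₂),
      intervalIntegral.integral_const_mul, intervalIntegral.integral_const_mul,
      intervalIntegral.integral_const_mul, intervalIntegral.integral_finset_sum huhatint]
  have hφb_le_A : ∀ b ∈ Ico (0:ℝ) T, (∫ s in (0:ℝ)..b, φ s) ≤ A := by
    intro b hb
    have h1 : IntervalIntegrable φ volume 0 b := hφint.mono_set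
      (by rw [uIcc_of_le hb.1, uIcc_of_le hT.le]; exact Icc_subset_Icc le_rfl hb.2.le)
    have h2 : IntervalIntegrable φ volume b T := hφint.mono_set
      (by rw [uIcc_of_le hb.2.le, uIcc_of_le hT.le]; exact Icc_subset_Icc hb.1 le_rfl)
    have hadd := intervalIntegral.integral_add_adjacent_intervals h1 h2
    have hnn : 0 ≤ ∫ s in b..T, φ s := by
      apply intervalIntegral.integral_nonneg_of_ae_restrict hb.2.le
      have hre : (volume.restrict (Icc b T)) = volume.restrict (Ico b T) :=
        (Measure.restrict_congr_set Ico_ae_eq_Icc).symm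
      have h3 : ∀ᵐ x ∂(volume.restrict (Ico b T)), 0 ≤ φ x :=
        (ae_restrict_iff' measurableSet_Ico).2 (ae_of_all _ fun x hx => hφnn x ⟨hb.1.trans hx.1, hx.2⟩)
      exact hre ▸ h3
    rw [← hAeq]; linarith
  -- key pointwise bound on [0, b] for b < T
  have key : ∀ b ∈ Ico (0:ℝ) T, (∫ t in (0:ℝ)..b, uhat m t) ≤ Real.exp A - 1 := by
    intro b hb
    have hIccsub : Icc (0:ℝ) b ⊆ Ico 0 T := fun x hx => ⟨hx.1, lt_of_le_of_lt hx.2 hb.2⟩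
    have hcb : ContinuousOn (uhat m) (Icc 0 b) := hcont.mono hIccsub
    set F : ℝ → ℝ := fun s => 1 + ∫ τ in (0:ℝ)..s, uhat m τ with hFdef
    have hF1 : ∀ s ∈ Icc (0:ℝ) b, 1 ≤ F s := by
      intro s hs
      have h0 : 0 ≤ ∫ τ in (0:ℝ)..s, uhat m τ :=
        intervalIntegral.integral_nonneg hs.1
          (fun u hu => huhatnn m u ⟨hu.1, lt_of_le_of_lt (hu.2.trans hs.2) hb.2⟩)
      simp only [hFdef]; linarith
    have hF0 : ∀ s ∈ Icc (0:ℝ) b, 0 < F s := fun s hs => lt_of_lt_of_le one_pos (hF1 s hs)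
    have hFcont : ContinuousOn F (Icc 0 b) := by
      apply continuousOn_const.add
      have h := intervalIntegral.continuousOn_primitive_interval (μ := volume)
        (a := (0:ℝ)) (b := b) (f := uhat m)
        (by rw [uIcc_of_le hb.1]; exact hcb.integrableOn_compact isCompact_Icc)
      rwa [uIcc_of_le hb.1] at h
    have hderiv : ∀ x ∈ Ioo (0:ℝ) b, HasDerivAt F (uhat m x) x := by
      intro x hx
      have hxT : x ∈ Ioo (0:ℝ) T := ⟨hx.1, hx.2.trans hb.2⟩
      have hix : IntervalIntegrable (uhat m) volume 0 x := by
        apply ContinuousOn.intervalIntegrable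
        rw [uIcc_of_le hx.1.le]
        exact hcb.mono (Icc_subset_Icc le_rfl hx.2.le)
      have hmeas : StronglyMeasurableAtFilter (uhat m) (𝓝 x) volume :=
        (hcont.mono Ioo_subset_Ico_self).stronglyMeasurableAtFilter isOpen_Ioo x hxT
      have hcx : ContinuousAt (uhat m) x :=
        (hcont.mono Ioo_subset_Ico_self).continuousAt (isOpen_Ioo.mem_nhds hxT)
      have h := intervalIntegral.integral_hasDerivAt_right hix hmeas hcx
      simpa [hFdef] using h.const_add 1
    set G : ℝ → ℝ := fun s => Real.log (F s) with hGdef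
    have hGcont : ContinuousOn G (Icc 0 b) :=
      hFcont.log (fun s hs => ne_of_gt (hF0 s hs))
    have hg_int : IntervalIntegrable (fun s => uhat m s / F s) volume 0 b := by
      apply ContinuousOn.intervalIntegrable
      rw [uIcc_of_le hb.1]
      exact hcb.div hFcont (fun s hs => ne_of_gt (hF0 s hs))
    have hFTC : ∫ s in (0:ℝ)..b, uhat m s / F s = G b - G 0 := by
      apply intervalIntegral.integral_eq_sub_of_hasDeriv_right_of_le hb.1 hGcont ?_ hg_int
      intro x hx
      exact (((hderiv x hx).log (ne_of_gt (hF0 x ⟨hx.1.le, hx.2.le⟩)))).hasDerivWithinAt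
    have hG0 : G 0 = 0 := by simp [hGdef, hFdef]
    have hmono : ∀ x ∈ Icc (0:ℝ) b, uhat m x / F x ≤ φ x := by
      intro x hx
      have hxI : x ∈ Ico (0:ℝ) T := hIccsub hx
      have h1 : uhat m x ≤ C₃ * um x + C₂ * (∑ l ∈ Finset.Ico 1 m, uhat l x)
          + C₂ * C₃ * u₀ x * F x := hrec x hxI
      have hF1x := hF1 x hx
      have hFx : 0 < F x := hF0 x hx
      rw [div_le_iff₀ hFx]
      have h2 : 0 ≤ C₃ * um x := mul_nonneg hC₃ (humnn x hxI)
      have h3 : 0 ≤ C₂ * (∑ l ∈ Finset.Ico 1 m, uhat l x) :=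
        mul_nonneg hC₂ (Finset.sum_nonneg fun l _ => huhatnn l x hxI)
      simp only [hφdef]
      nlinarith [mul_nonneg h2 (by linarith : (0:ℝ) ≤ F x - 1),
        mul_nonneg h3 (by linarith : (0:ℝ) ≤ F x - 1)]
    have hφint_b : IntervalIntegrable φ volume 0 b := hφint.mono_set
      (by rw [uIcc_of_le hb.1, uIcc_of_le hT.le]; exact Icc_subset_Icc le_rfl hb.2.le)
    have hle : ∫ s in (0:ℝ)..b, uhat m s / F s ≤ ∫ s in (0:ℝ)..b, φ s :=
      intervalIntegral.integral_mono_on hb.1 hg_int hφint_b hmono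
    have hlog : G b ≤ A := by
      have hA := hφb_le_A b hb
      rw [hFTC, hG0] at hle
      linarith
    have hFb : F b ≤ Real.exp A := by
      calc F b = Real.exp (G b) := (Real.exp_log (hF0 b ⟨hb.1, le_rfl⟩)).symm
        _ ≤ Real.exp A := Real.exp_le_exp.2 hlog
    have hFbeq : F b = 1 + ∫ t in (0:ℝ)..b, uhat m t := rfl
    linarith
  -- integrability up to T via monotone convergence
  set b : ℕ → ℝ := fun n => T - T / (n+1) with hbdef
  have hb_mem : ∀ n, b n ∈ Ico (0:ℝ) T := by
    intro n
    have h1 : T / ((n:ℝ)+1) ≤ T := by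
      apply div_le_self hT.le
      have : (0:ℝ) ≤ (n:ℝ) := Nat.cast_nonneg n
      linarith
    have h2 : 0 < T / ((n:ℝ)+1) := by positivity
    constructor <;> simp only [hbdef] <;> linarith
  have hb_mono : Monotone b := by
    intro i j hij
    have h : T / ((j:ℝ)+1) ≤ T / ((i:ℝ)+1) := by
      have hij' : ((i:ℝ)+1) ≤ ((j:ℝ)+1) := by
        have : (i:ℝ) ≤ (j:ℝ) := Nat.cast_le.2 hij
        linarith
      gcongr
    simp only [hbdef]; linarith
  have hb_tendsto : Filter.Tendsto b Filter.atTop (nhds T) := by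
    have h1 : Filter.Tendsto (fun n : ℕ => T / ((n:ℝ)+1)) Filter.atTop (nhds 0) := by
      apply Filter.Tendsto.div_atTop tendsto_const_nhds
      exact Filter.tendsto_atTop_add_const_right _ 1 tendsto_natCast_atTop_atTop
    have h2 := h1.const_sub T
    simpa using h2
  have hex : ∀ x ∈ Ioo (0:ℝ) T, ∃ n, x ≤ b n := by
    intro x hx
    exact (hb_tendsto.eventually (eventually_ge_nhds hx.2)).exists
  set g : ℝ → ENNReal := fun x => ENNReal.ofReal (uhat m x) with hgdef
  have hgcont : ContinuousOn g (Ico 0 T) := ENNReal.continuous_ofReal.comp_continuousOn hcont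
  have hIocsub : ∀ n, Ioc (0:ℝ) (b n) ⊆ Ico 0 T := fun n x hx =>
    ⟨hx.1.le, lt_of_le_of_lt hx.2 (hb_mem n).2⟩
  have hf_meas : ∀ n, AEMeasurable ((Ioc (0:ℝ) (b n)).indicator g) volume := by
    intro n
    rw [aemeasurable_indicator_iff measurableSet_Ioc]
    exact (hgcont.mono (hIocsub n)).aemeasurable measurableSet_Ioc
  have hf_mono : ∀ᵐ x : ℝ, Monotone fun n => (Ioc (0:ℝ) (b n)).indicator g x := by
    apply ae_of_all
    intro x i j hij
    exact Set.indicator_le_indicator_of_subset (Ioc_subset_Ioc_right (hb_mono hij))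
      (fun _ => zero_le) x
  have hsup : ∀ x, (⨆ n, (Ioc (0:ℝ) (b n)).indicator g x) = (Ioo (0:ℝ) T).indicator g x := by
    intro x
    by_cases hx : x ∈ Ioo (0:ℝ) T
    · obtain ⟨n, hn⟩ := hex x hx
      rw [Set.indicator_of_mem hx]
      refine le_antisymm (iSup_le fun k => ?_) (le_iSup_of_le n ?_)
      · exact Set.indicator_le_self _ _ x
      · rw [Set.indicator_of_mem (Set.mem_Ioc.2 ⟨hx.1, hn⟩)]
    · have hnot : ∀ n, x ∉ Ioc (0:ℝ) (b n) := fun n hxn =>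
        hx ⟨hxn.1, lt_of_le_of_lt hxn.2 (hb_mem n).2⟩
      rw [Set.indicator_of_notMem hx]
      refine le_antisymm (iSup_le fun n => ?_) zero_le
      rw [Set.indicator_of_notMem (hnot n)]
  have hbound : ∀ n, (∫⁻ x, (Ioc (0:ℝ) (b n)).indicator g x) ≤ ENNReal.ofReal (Real.exp A - 1) := by
    intro n
    rw [lintegral_indicator measurableSet_Ioc]
    have hib : IntervalIntegrable (uhat m) volume 0 (b n) := by
      apply ContinuousOn.intervalIntegrable
      rw [uIcc_of_le (hb_mem n).1]
      exact hcont.mono fun x hx => ⟨hx.1, lt_of_le_of_lt hx.2 (hb_mem n).2⟩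
    have hInt : IntegrableOn (uhat m) (Ioc 0 (b n)) volume := by
      have := intervalIntegrable_iff.1 hib
      rwa [uIoc_of_le (hb_mem n).1] at this
    have hnn : 0 ≤ᵐ[volume.restrict (Ioc (0:ℝ) (b n))] uhat m :=
      (ae_restrict_iff' measurableSet_Ioc).2 (ae_of_all _ fun x hx => huhatnn m x (hIocsub n hx))
    have heq : ∫⁻ x in Ioc (0:ℝ) (b n), g x = ENNReal.ofReal (∫ x in Ioc (0:ℝ) (b n), uhat m x) :=
      (ofReal_integral_eq_lintegral_ofReal hInt hnn).symm
    rw [heq, ← intervalIntegral.integral_of_le (hb_mem n).1]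
    exact ENNReal.ofReal_le_ofReal (key (b n) (hb_mem n))
  have hkey2 : (∫⁻ x in Ioo (0:ℝ) T, g x) ≤ ENNReal.ofReal (Real.exp A - 1) := by
    rw [← lintegral_indicator measurableSet_Ioo]
    have h1 : ∫⁻ x, (Ioo (0:ℝ) T).indicator g x = ⨆ n, ∫⁻ x, (Ioc (0:ℝ) (b n)).indicator g x := by
      rw [← lintegral_iSup' hf_meas hf_mono]
      exact lintegral_congr fun x => (hsup x).symm
    rw [h1]
    exact iSup_le hbound
  have hIntOn : IntegrableOn (uhat m) (Ioc 0 T) volume := by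
    constructor
    · have h1 : AEStronglyMeasurable (uhat m) (volume.restrict (Ico 0 T)) :=
        hcont.aestronglyMeasurable measurableSet_Ico
      rwa [Measure.restrict_congr_set (Ico_ae_eq_Icc.trans Ioc_ae_eq_Icc.symm)] at h1
    · rw [HasFiniteIntegral, ← Measure.restrict_congr_set Ioo_ae_eq_Ioc]
      have heq : ∫⁻ x in Ioo (0:ℝ) T, ‖uhat m x‖ₑ = ∫⁻ x in Ioo (0:ℝ) T, g x := by
        apply setLIntegral_congr_fun measurableSet_Ioo
        intro x hx
        exact Real.enorm_eq_ofReal (huhatnn m x ⟨hx.1.le, hx.2⟩)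
      rw [heq]
      exact lt_of_le_of_lt hkey2 ENNReal.ofReal_lt_top
  have hII : IntervalIntegrable (uhat m) volume 0 T := by
    rw [intervalIntegrable_iff, uIoc_of_le hT.le]
    exact hIntOn
  refine ⟨hII, ?_⟩
  -- conclude by continuity of the primitive
  have hIccInt : IntegrableOn (uhat m) (Icc 0 T) volume := by
    rwa [IntegrableOn, ← Measure.restrict_congr_set Ioc_ae_eq_Icc]
  have hPcont : ContinuousOn (fun x => ∫ t in (0:ℝ)..x, uhat m t) (Icc 0 T) := by
    have h := intervalIntegral.continuousOn_primitive_interval (μ := volume)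
      (a := (0:ℝ)) (b := T) (f := uhat m) (by rwa [uIcc_of_le hT.le])
    rwa [uIcc_of_le hT.le] at h
  have htd : Filter.Tendsto (fun x => ∫ t in (0:ℝ)..x, uhat m t) (nhdsWithin T (Iio T))
      (nhds (∫ t in (0:ℝ)..T, uhat m t)) := by
    have h3 : ContinuousWithinAt (fun x => ∫ t in (0:ℝ)..x, uhat m t) (Ico 0 T) T :=
      (hPcont T (right_mem_Icc.2 hT.le)).mono Ico_subset_Icc_self
    rwa [ContinuousWithinAt, nhdsWithin_Ico_eq_nhdsLT hT] at h3
  refine le_of_tendsto htd ?_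
  have hev : ∀ᶠ x in nhdsWithin T (Iio T), x ∈ Ico (0:ℝ) T := by
    have h0 : ∀ᶠ x in nhdsWithin T (Iio T), 0 < x :=
      Filter.Eventually.filter_mono nhdsWithin_le_nhds (eventually_gt_nhds hT)
    have h1 : ∀ᶠ x in nhdsWithin T (Iio T), x < T := eventually_mem_nhdsWithin
    filter_upwards [h0, h1] with x hx0 hx1
    exact ⟨hx0.le, hx1⟩
  filter_upwards [hev] with x hx using key x hx
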